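/- Let G be a valued group satisfying axiom (D6): if f ≠ 1, g ≠ 1 and f ≍ g then ⁅f,g⁆ ≺ f, where ⁅f,g⁆ := f⁻¹*g⁻¹*f*g. Then for all f, g ∈ G with f ≠ 1, g ≠ 1 and f ≍ g: if f*g ≺ f then g*f ≺ f; and if ¬(f*g ≺ f) then (f*g)*(g*f)⁻¹ ≺ f*g (i.e. f*g ∼ g*f). (Hence the residue group at each value is Abelian.) -/
import Mathlib


variable {G : Type*} [Group G]

/-- `f ≺ g` : strict part of the dominance relation. -/
def vlt (le : G → G → Prop) (f g : G) : Prop := le f g ∧ ¬ le g f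

/-- `f ≍ g` : equivalence induced by the dominance relation. -/
def veq (le : G → G → Prop) (f g : G) : Prop := le f g ∧ le g f

/-- A dominance relation on a group `G`, making it a valued group:
a reflexive, transitive, total relation satisfying D1-D4. -/
structure IsValuation (le : G → G → Prop) : Prop where
  refl : ∀ f : G, le f f
  trans : ∀ f g h : G, le f g → le g h → le f h
  total : ∀ f g : G, le f g ∨ le g f
  d1 : ∀ f : G, f ≠ 1 → vlt le 1 f
  d2 : ∀ f g : G, le (f * g) f ∨ le (f * g) g
  d3 : ∀ f g h : G, le f g → le (h * f * h⁻¹) (h * g * h⁻¹)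
  d4 : ∀ f : G, veq le f f⁻¹

/-- Proposition 2.30 (residue groups are Abelian): in a valued group satisfying D6,
for nonidentity `f ≍ g`: if `f*g ≺ f` then `g*f ≺ f`, and otherwise `f*g ∼ g*f`,
i.e. `(f*g)*(g*f)⁻¹ ≺ f*g`. -/
theorem residue_abelian (le : G → G → Prop) (hv : IsValuation le)
    (hd6 : ∀ f g : G, f ≠ 1 → g ≠ 1 → veq le f g → vlt le (f⁻¹ * g⁻¹ * f * g) f) :
    ∀ f g : G, f ≠ 1 → g ≠ 1 → veq le f g →
      (vlt le (f * g) f → vlt le (g * f) f) ∧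
      (¬ vlt le (f * g) f → vlt le ((f * g) * (g * f)⁻¹) (f * g)) := by
  intro f g hf hg hfg
  obtain ⟨hle, hge⟩ := hfg
  obtain ⟨hf1, hf2⟩ := hv.d4 f
  constructor
  · rintro ⟨h1, h2⟩
    constructor
    · have := hv.d3 (f * g) f f⁻¹ h1
      rw [show f⁻¹ * (f * g) * f⁻¹⁻¹ = g * f by group,
          show f⁻¹ * f * f⁻¹⁻¹ = f by group] at this
      exact this
    · intro hc
      have := hv.d3 f (g * f) f hc
      rw [show f * f * f⁻¹ = f by group,
          show f * (g * f) * f⁻¹ = f * g by group] at this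
      exact h2 this
  · intro hns
    have hfg_le_f : le (f * g) f :=
      (hv.d2 f g).elim id (fun h => hv.trans _ _ _ h hge)
    have hf_le_fg : le f (f * g) := by
      by_contra hc
      exact hns ⟨hfg_le_f, hc⟩
    have hveq : veq le f⁻¹ g⁻¹ := by
      obtain ⟨hg1, hg2⟩ := hv.d4 g
      exact ⟨hv.trans _ _ _ hf2 (hv.trans _ _ _ hle hg1),
             hv.trans _ _ _ hg2 (hv.trans _ _ _ hge hf1)⟩
    obtain ⟨hc1, hc2⟩ := hd6 f⁻¹ g⁻¹ (inv_ne_one.mpr hf) (inv_ne_one.mpr hg) hveq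
    rw [show f⁻¹⁻¹ * g⁻¹⁻¹ * f⁻¹ * g⁻¹ = (f * g) * (g * f)⁻¹ by group] at hc1 hc2
    exact ⟨hv.trans _ _ _ hc1 (hv.trans _ _ _ hf2 hf_le_fg),
           fun hc => hc2 (hv.trans _ _ _ hf2 (hv.trans _ _ _ hf_le_fg hc))⟩
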